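/- (Δ-system lemma, uncountable case) Every uncountable family of finite sets contains an uncountable subfamily forming a Δ-system, i.e., there is a fixed finite set R (the root) such that any two distinct members of the subfamily intersect exactly in R. -/

import Mathlib

private lemma delta_aux {I α : Type*} [DecidableEq α] (n : ℕ) :
    ∀ (A : I → Finset α) (J : Set I), ¬ J.Countable → (∀ i ∈ J, (A i).card = n) →
      ∃ J' : Set I, J' ⊆ J ∧ ¬ J'.Countable ∧ ∃ R : Finset α,
        ∀ i ∈ J', ∀ j ∈ J', i ≠ j → A i ∩ A j = R := by
  induction n with
  | zero =>
    intro A J hJ hcard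
    refine ⟨J, le_refl _, hJ, ∅, fun i hi j hj _ => ?_⟩
    have : A i = ∅ := Finset.card_eq_zero.mp (hcard i hi)
    simp [this]
  | succ n ih =>
    intro A J hJ hcard
    by_cases h : ∃ x : α, ¬ {i ∈ J | x ∈ A i}.Countable
    · obtain ⟨x, hx⟩ := h
      obtain ⟨J', hJ'sub, hJ'unc, R, hR⟩ :=
        ih (fun i => (A i).erase x) {i ∈ J | x ∈ A i} hx
          (fun i hi => by
            rw [Finset.card_erase_of_mem hi.2, hcard i hi.1]; rfl)
      refine ⟨J', fun i hi => (hJ'sub hi).1, hJ'unc, insert x R, fun i hi j hj hij => ?_⟩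
      have hxi : x ∈ A i := (hJ'sub hi).2
      have hxj : x ∈ A j := (hJ'sub hj).2
      have := hR i hi j hj hij
      ext a
      simp only [Finset.mem_inter, Finset.mem_insert]
      constructor
      · rintro ⟨hai, haj⟩
        by_cases hax : a = x
        · exact Or.inl hax
        · right; rw [← this]
          simp [Finset.mem_erase, hax, hai, haj]
      · rintro (rfl | haR)
        · exact ⟨hxi, hxj⟩
        · rw [← this] at haR
          simp only [Finset.mem_inter, Finset.mem_erase] at haR
          exact ⟨haR.1.2, haR.2.2⟩
    · push_neg at h
      set S : Set (Set I) :=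
        {J' | J' ⊆ J ∧ ∀ i ∈ J', ∀ j ∈ J', i ≠ j → A i ∩ A j = ∅} with hS
      obtain ⟨M, hM⟩ := zorn_subset S (fun c hc hchain => by
        refine ⟨⋃₀ c, ⟨fun i hi => ?_, fun i hi j hj hij => ?_⟩, fun s hs => Set.subset_sUnion_of_mem hs⟩
        · obtain ⟨s, hs, his⟩ := hi
          exact (hc hs).1 his
        · obtain ⟨s, hs, his⟩ := hi
          obtain ⟨t, ht, hjt⟩ := hj
          rcases hchain.total hs ht with hst | hts
          · exact (hc ht).2 i (hst his) j hjt hij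
          · exact (hc hs).2 i his j (hts hjt) hij)
      have hMS := hM.prop
      by_cases hMc : M.Countable
      · exfalso
        set U : Set α := ⋃ j ∈ M, (A j : Set α) with hU
        have hUc : U.Countable :=
          Set.Countable.biUnion hMc (fun j _ => (A j).finite_toSet.countable)
        have hsub : J ⊆ ⋃ x ∈ U, {i ∈ J | x ∈ A i} := by
          intro i hi
          by_cases hiM : i ∈ M
          · have : (A i).Nonempty := Finset.card_pos.mp (by rw [hcard i hi]; omega)
            obtain ⟨x, hxAi⟩ := this
            exact Set.mem_biUnion (Set.mem_biUnion hiM hxAi) ⟨hi, hxAi⟩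
          · have hnot : insert i M ∉ S := fun hmem => by
              have := hM.2 hmem (Set.subset_insert i M)
              exact hiM (this (Set.mem_insert i M))
            have : ∃ j ∈ M, (A i ∩ A j).Nonempty := by
              by_contra hno
              push_neg at hno
              apply hnot
              refine ⟨fun a ha => ?_, fun a ha b hb hab => ?_⟩
              · rcases ha with rfl | ha
                · exact hi
                · exact hMS.1 ha
              · rcases ha with rfl | ha <;> rcases hb with rfl | hb
                · exact absurd rfl hab
                · exact hno b hb
                · rw [Finset.inter_comm]
                  exact hno a ha
                · exact hMS.2 a ha b hb hab
            obtain ⟨j, hjM, x, hxij⟩ := this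
            simp only [Finset.mem_inter] at hxij
            exact Set.mem_biUnion (Set.mem_biUnion hjM hxij.2) ⟨hi, hxij.1⟩
        exact hJ (Set.Countable.mono hsub (Set.Countable.biUnion hUc fun x _ => h x))
      · exact ⟨M, hMS.1, hMc, ∅, hMS.2⟩

/-- Δ-system lemma: every uncountable family of finite sets contains an
uncountable subfamily which is a Δ-system with some finite root `R`. -/
theorem stmt_7 {I α : Type*} [DecidableEq α]
    (hI : ¬ (Set.univ : Set I).Countable) (A : I → Finset α) :
    ∃ J : Set I, ¬ J.Countable ∧ ∃ R : Finset α,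
      ∀ i ∈ J, ∀ j ∈ J, i ≠ j → A i ∩ A j = R := by
  have : ∃ n : ℕ, ¬ {i : I | (A i).card = n}.Countable := by
    by_contra hno
    push_neg at hno
    apply hI
    have : (Set.univ : Set I) = ⋃ n : ℕ, {i : I | (A i).card = n} := by
      ext i; simp
    rw [this]
    exact Set.countable_iUnion hno
  obtain ⟨n, hn⟩ := this
  obtain ⟨J', _, hJ'unc, R, hR⟩ := delta_aux n A _ hn (fun i hi => hi)
  exact ⟨J', hJ'unc, R, hR⟩
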